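/- Let I ⊂ ℝ be a bounded closed nondegenerate interval, f : I → ℝ∪{±∞} non-decreasing with f ∈ L^r(I) for some r ≥ 1, and let a < b be real numbers. Define ψ(ξ) = ‖f − (a·1_{[min I, ξ)} + b·1_{[ξ, max I]})‖_r for ξ ∈ I. Then ψ(ξ) is minimal over ξ ∈ I if and only if ξ ∈ Q_{(a+b)/2}^f. -/

import Mathlib

open Set MeasureTheory

lemma absrpow_lt {a b t r : ℝ} (hr : 0 < r) (hab : a < b) (h : t < (a+b)/2) :
    |t - a| ^ r < |t - b| ^ r := by
  apply Real.rpow_lt_rpow (abs_nonneg _) _ hr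
  nlinarith [sq_abs (t-a), sq_abs (t-b), abs_nonneg (t-a), abs_nonneg (t-b)]

lemma absrpow_gt {a b t r : ℝ} (hr : 0 < r) (hab : a < b) (h : (a+b)/2 < t) :
    |t - b| ^ r < |t - a| ^ r := by
  apply Real.rpow_lt_rpow (abs_nonneg _) _ hr
  nlinarith [sq_abs (t-a), sq_abs (t-b), abs_nonneg (t-a), abs_nonneg (t-b)]

lemma absrpow_eq {a b t r : ℝ} (h : t = (a+b)/2) : |t - a| ^ r = |t - b| ^ r := by
  subst h
  have h2 : (a+b)/2 - a = -((a+b)/2 - b) := by ring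
  rw [h2, abs_neg]

/-- The quantile set `Q_c^f` of a real function `f` on `[α,β] ⊆ ℝ`, with the conventions
`inf ∅ = max I` and `sup ∅ = min I`. -/
noncomputable def QsetR (α β : ℝ) (f : ℝ → ℝ) (c : ℝ) : Set ℝ :=
  Set.Icc (sInf ({x | x ∈ Set.Icc α β ∧ c ≤ f x} ∪ {β}))
          (sSup ({x | x ∈ Set.Icc α β ∧ f x ≤ c} ∪ {α}))

theorem stmt8 (α β : ℝ) (hαβ : α < β) (f : ℝ → ℝ) (hf : MonotoneOn f (Set.Icc α β))
    (r : ℝ) (hr : 1 ≤ r)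
    (hLr : MemLp f (ENNReal.ofReal r) (volume.restrict (Set.Icc α β)))
    (a b : ℝ) (hab : a < b) (ξ : ℝ) (hξ : ξ ∈ Set.Icc α β) :
    (∀ η ∈ Set.Icc α β,
        eLpNorm (fun x => f x - (if x < ξ then a else b)) (ENNReal.ofReal r)
            (volume.restrict (Set.Icc α β))
          ≤ eLpNorm (fun x => f x - (if x < η then a else b)) (ENNReal.ofReal r)
            (volume.restrict (Set.Icc α β)))
      ↔ ξ ∈ QsetR α β f ((a + b) / 2) := by
  have r0 : 0 < r := lt_of_lt_of_le one_pos hr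
  set μ := volume.restrict (Set.Icc α β) with hμ
  haveI hfin : IsFiniteMeasure μ := by
    constructor
    rw [hμ, Measure.restrict_apply_univ, Real.volume_Icc]
    exact ENNReal.ofReal_lt_top
  set c : ℝ := (a+b)/2 with hc
  set p : ENNReal := ENNReal.ofReal r with hp
  have hp0 : p ≠ 0 := by
    simp only [hp, ne_eq, ENNReal.ofReal_eq_zero, not_le]
    exact r0
  have hpt : p ≠ ⊤ := ENNReal.ofReal_ne_top
  have hptr : p.toReal = r := by rw [hp, ENNReal.toReal_ofReal r0.le]
  -- membership of the step functions in L^p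
  have hgmem : ∀ η : ℝ, MemLp (fun x => (if x < η then a else b)) p μ := by
    intro η
    have heq : (fun x : ℝ => (if x < η then a else b))
        = fun x => (Set.Iio η).indicator (fun _ => a - b) x + b := by
      funext x
      by_cases hx : x < η
      · simp [Set.indicator_of_mem (Set.mem_Iio.mpr hx), hx]
      · simp [Set.indicator_of_notMem (fun hxx => hx (Set.mem_Iio.mp hxx)), hx]
    rw [heq]
    exact (memLp_indicator_const p measurableSet_Iio (a-b)
      (Or.inr (measure_ne_top μ _))).add (memLp_const b)
  have hmem : ∀ η : ℝ, MemLp (fun x => f x - (if x < η then a else b)) p μ :=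
    fun η => hLr.sub (hgmem η)
  have hint : ∀ η : ℝ, Integrable (fun x => |f x - (if x < η then a else b)| ^ r) μ := by
    intro η
    have h2 := (hmem η).integrable_norm_rpow hp0 hpt
    simpa [hptr, Real.norm_eq_abs] using h2
  set J : ℝ → ℝ := fun η => ∫ x, |f x - (if x < η then a else b)| ^ r ∂μ with hJ
  have hJnonneg : ∀ η, 0 ≤ J η :=
    fun η => integral_nonneg fun x => Real.rpow_nonneg (abs_nonneg _) r
  have hLP : ∀ η : ℝ, eLpNorm (fun x => f x - (if x < η then a else b)) p μ
      = (ENNReal.ofReal (J η)) ^ (1/r) := by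
    intro η
    rw [eLpNorm_eq_lintegral_rpow_enorm_toReal hp0 hpt, hptr, hJ]
    congr 1
    rw [ofReal_integral_eq_lintegral_ofReal (hint η)
      (Filter.Eventually.of_forall fun x => Real.rpow_nonneg (abs_nonneg _) r)]
    apply lintegral_congr
    intro x
    rw [← ENNReal.ofReal_rpow_of_nonneg (abs_nonneg _) r0.le]
    congr 1
    rw [← Real.norm_eq_abs, ofReal_norm]
  have hred : ∀ η : ℝ, (eLpNorm (fun x => f x - (if x < ξ then a else b)) p μ
      ≤ eLpNorm (fun x => f x - (if x < η then a else b)) p μ) ↔ J ξ ≤ J η := by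
    intro η
    rw [hLP ξ, hLP η, ENNReal.rpow_le_rpow_iff (by positivity : (0:ℝ) < 1/r),
      ENNReal.ofReal_le_ofReal_iff (hJnonneg η)]
  -- the difference function
  set h : ℝ → ℝ := fun x => |f x - a| ^ r - |f x - b| ^ r with hh
  have Hha : Integrable (fun x => |f x - a| ^ r) μ := by
    have := (hLr.sub (memLp_const a)).integrable_norm_rpow hp0 hpt
    simpa [hptr, Real.norm_eq_abs] using this
  have Hhb : Integrable (fun x => |f x - b| ^ r) μ := by
    have := (hLr.sub (memLp_const b)).integrable_norm_rpow hp0 hpt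
    simpa [hptr, Real.norm_eq_abs] using this
  have Hh : Integrable h μ := Hha.sub Hhb
  -- key decomposition
  have key : ∀ θ η : ℝ, α ≤ θ → θ ≤ η → η ≤ β →
      J η = J θ + ∫ x in Set.Ioc θ η, h x := by
    intro θ η hθ hθη hη
    have hpt2 : ∀ x : ℝ, |f x - (if x < η then a else b)| ^ r
        = |f x - (if x < θ then a else b)| ^ r + (Set.Ico θ η).indicator h x := by
      intro x
      rcases lt_or_ge x θ with h1 | h1
      · have h2 : x < η := lt_of_lt_of_le h1 hθη
        rw [if_pos h2, if_pos h1,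
          Set.indicator_of_notMem (fun hx => absurd (Set.mem_Ico.mp hx).1 (not_le.mpr h1)),
          add_zero]
      · rcases lt_or_ge x η with h2 | h2
        · rw [if_pos h2, if_neg (not_lt.mpr h1),
            Set.indicator_of_mem (Set.mem_Ico.mpr ⟨h1, h2⟩), hh]
          ring
        · rw [if_neg (not_lt.mpr h2), if_neg (not_lt.mpr (le_trans hθη h2)),
            Set.indicator_of_notMem (fun hx => absurd (Set.mem_Ico.mp hx).2 (not_lt.mpr h2)),
            add_zero]
    have hsub : Set.Ico θ η ⊆ Set.Icc α β :=
      fun x hx => ⟨le_trans hθ hx.1, le_of_lt (lt_of_lt_of_le hx.2 hη)⟩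
    have step1 : J η = J θ + ∫ x, (Set.Ico θ η).indicator h x ∂μ := by
      rw [hJ]
      simp only [hpt2]
      exact integral_add (hint θ) (Hh.indicator measurableSet_Ico)
    rw [step1]
    congr 1
    rw [integral_indicator measurableSet_Ico, hμ,
      Measure.restrict_restrict measurableSet_Ico, Set.inter_eq_self_of_subset_left hsub,
      integral_Ico_eq_integral_Ioo, ← integral_Ioc_eq_integral_Ioo]
  -- quantile endpoints
  set A : Set ℝ := {x | x ∈ Set.Icc α β ∧ c ≤ f x} ∪ {β} with hA
  set B : Set ℝ := {x | x ∈ Set.Icc α β ∧ f x ≤ c} ∪ {α} with hB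
  set s := sInf A with hs
  set S := sSup B with hS
  have hAsub : A ⊆ Set.Icc α β := by
    rintro x (hx | rfl)
    · exact hx.1
    · exact ⟨hαβ.le, le_rfl⟩
  have hBsub : B ⊆ Set.Icc α β := by
    rintro x (hx | rfl)
    · exact hx.1
    · exact ⟨le_rfl, hαβ.le⟩
  have hAne : A.Nonempty := ⟨β, Or.inr rfl⟩
  have hBne : B.Nonempty := ⟨α, Or.inr rfl⟩
  have hAbdd : BddBelow A := ⟨α, fun x hx => (hAsub hx).1⟩
  have hBbdd : BddAbove B := ⟨β, fun x hx => (hBsub hx).2⟩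
  have hαs : α ≤ s := le_csInf hAne fun x hx => (hAsub hx).1
  have hsβ : s ≤ β := csInf_le hAbdd (Or.inr rfl)
  have hαS : α ≤ S := le_csSup hBbdd (Or.inr rfl)
  have hSβ : S ≤ β := csSup_le hBne fun x hx => (hBsub hx).2
  have below : ∀ x, α ≤ x → x < s → f x < c := by
    intro x hx1 hx2
    by_contra hcon
    push_neg at hcon
    exact absurd (csInf_le hAbdd (Or.inl ⟨⟨hx1, le_trans hx2.le hsβ⟩, hcon⟩))
      (not_le.mpr hx2)
  have above : ∀ x, x ≤ β → S < x → c < f x := by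
    intro x hx1 hx2
    by_contra hcon
    push_neg at hcon
    exact absurd (le_csSup hBbdd (Or.inl ⟨⟨le_trans hαS hx2.le, hx1⟩, hcon⟩))
      (not_le.mpr hx2)
  have hsS : s ≤ S := by
    by_contra hcon
    push_neg at hcon
    have h1 := above ((S+s)/2) (by linarith) (by linarith)
    have h2 := below ((S+s)/2) (by linarith) (by linarith)
    linarith
  have mid : ∀ x, s < x → x < S → f x = c := by
    intro x hx1 hx2
    have hxI : x ∈ Set.Icc α β := ⟨le_trans hαs hx1.le, le_trans hx2.le hSβ⟩
    obtain ⟨y, hyA, hyx⟩ := exists_lt_of_csInf_lt hAne hx1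
    rcases hyA with hyA | hyA
    · obtain ⟨z, hzB, hxz⟩ := exists_lt_of_lt_csSup hBne hx2
      rcases hzB with hzB | hzB
      · exact le_antisymm (le_trans (hf hxI hzB.1 hxz.le) hzB.2)
          (le_trans hyA.2 (hf hyA.1 hxI hyx.le))
      · rw [Set.mem_singleton_iff] at hzB
        rw [hzB] at hxz
        exact absurd hxz (not_lt.mpr hxI.1)
    · rw [Set.mem_singleton_iff] at hyA
      rw [hyA] at hyx
      exact absurd hyx (not_lt.mpr hxI.2)
  -- sign of h
  have hneg : ∀ x, α ≤ x → x < s → h x < 0 :=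
    fun x h1 h2 => sub_neg.mpr (absrpow_lt r0 hab (below x h1 h2))
  have hposf : ∀ x, x ≤ β → S < x → 0 < h x :=
    fun x h1 h2 => sub_pos.mpr (absrpow_gt r0 hab (above x h1 h2))
  have hzero : ∀ x, s < x → x < S → h x = 0 :=
    fun x h1 h2 => sub_eq_zero.mpr (absrpow_eq (mid x h1 h2))
  -- integrals of h over subintervals
  have HhOn : ∀ u v : ℝ, α ≤ u → v ≤ β → IntegrableOn h (Set.Ioc u v) volume := by
    intro u v hu hv
    have : IntegrableOn h (Set.Icc α β) volume := Hh
    exact this.mono_set (fun x hx => ⟨le_trans hu hx.1.le, le_trans hx.2 hv⟩)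
  have intzero : ∀ θ η, s ≤ θ → θ ≤ η → η ≤ S → ∫ x in Set.Ioc θ η, h x = 0 := by
    intro θ η h1 h2 h3
    have hae : ∀ᵐ x ∂(volume : Measure ℝ), x ∈ Set.Ioc θ η → h x = 0 := by
      rw [Filter.eventually_iff, mem_ae_iff]
      refine measure_mono_null ?_ (measure_singleton S)
      intro x hx
      simp only [Set.mem_compl_iff, Set.mem_setOf_eq] at hx
      push_neg at hx
      obtain ⟨hmem, hne⟩ := hx
      rw [Set.mem_singleton_iff]
      by_contra hxS
      have hxS' : x < S := lt_of_le_of_ne (le_trans hmem.2 h3) hxS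
      exact hne (hzero x (lt_of_le_of_lt h1 hmem.1) hxS')
    exact integral_eq_zero_of_ae ((ae_restrict_iff' measurableSet_Ioc).mpr hae)
  have intnonpos : ∀ θ η, α ≤ θ → θ ≤ η → η ≤ s → ∫ x in Set.Ioc θ η, h x ≤ 0 := by
    intro θ η h1 h2 h3
    have hae : ∀ᵐ x ∂(volume : Measure ℝ), x ∈ Set.Ioc θ η → h x ≤ 0 := by
      rw [Filter.eventually_iff, mem_ae_iff]
      refine measure_mono_null ?_ (measure_singleton s)
      intro x hx
      simp only [Set.mem_compl_iff, Set.mem_setOf_eq] at hx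
      push_neg at hx
      obtain ⟨hmem, hgt⟩ := hx
      rw [Set.mem_singleton_iff]
      by_contra hxs
      have hxs' : x < s := lt_of_le_of_ne (le_trans hmem.2 h3) hxs
      have := hneg x (le_trans h1 hmem.1.le) hxs'
      linarith
    exact integral_nonpos_of_ae ((ae_restrict_iff' measurableSet_Ioc).mpr hae)
  have intneg : ∀ θ η, α ≤ θ → θ < η → η ≤ s → ∫ x in Set.Ioc θ η, h x < 0 := by
    intro θ η h1 h2 h3
    have hae : ∀ᵐ x ∂(volume : Measure ℝ), x ∈ Set.Ioc θ η → 0 ≤ -h x := by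
      rw [Filter.eventually_iff, mem_ae_iff]
      refine measure_mono_null ?_ (measure_singleton s)
      intro x hx
      simp only [Set.mem_compl_iff, Set.mem_setOf_eq] at hx
      push_neg at hx
      obtain ⟨hmem, hgt⟩ := hx
      rw [Set.mem_singleton_iff]
      by_contra hxs
      have hxs' : x < s := lt_of_le_of_ne (le_trans hmem.2 h3) hxs
      have := hneg x (le_trans h1 hmem.1.le) hxs'
      linarith
    have hnn : 0 ≤ᶠ[ae (volume.restrict (Set.Ioc θ η))] (fun x => -h x) :=
      (ae_restrict_iff' measurableSet_Ioc).mpr hae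
    have hIO : IntegrableOn (fun x => -h x) (Set.Ioc θ η) volume :=
      (HhOn θ η h1 (le_trans h3 hsβ)).neg
    have hpos : 0 < ∫ x in Set.Ioc θ η, -h x := by
      rw [setIntegral_pos_iff_support_of_nonneg_ae hnn hIO]
      apply lt_of_lt_of_le _ (measure_mono (s := Set.Ioo θ η) _)
      · rw [Real.volume_Ioo]
        exact ENNReal.ofReal_pos.mpr (by linarith)
      · intro x hx
        constructor
        · simp only [Function.mem_support, ne_eq, neg_eq_zero]
          exact ne_of_lt (hneg x (le_trans h1 hx.1.le) (lt_of_lt_of_le hx.2 h3))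
        · exact ⟨hx.1, hx.2.le⟩
    rw [integral_neg] at hpos
    linarith
  have intnonneg : ∀ θ η, S ≤ θ → θ ≤ η → η ≤ β → 0 ≤ ∫ x in Set.Ioc θ η, h x := by
    intro θ η h1 h2 h3
    apply integral_nonneg_of_ae
    refine (ae_restrict_iff' measurableSet_Ioc).mpr (Filter.Eventually.of_forall ?_)
    intro x hx
    exact (hposf x (le_trans hx.2 h3) (lt_of_le_of_lt h1 hx.1)).le
  have intpos : ∀ θ η, S ≤ θ → θ < η → η ≤ β → 0 < ∫ x in Set.Ioc θ η, h x := by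
    intro θ η h1 h2 h3
    have hnn : 0 ≤ᶠ[ae (volume.restrict (Set.Ioc θ η))] h := by
      refine (ae_restrict_iff' measurableSet_Ioc).mpr (Filter.Eventually.of_forall ?_)
      intro x hx
      exact (hposf x (le_trans hx.2 h3) (lt_of_le_of_lt h1 hx.1)).le
    rw [setIntegral_pos_iff_support_of_nonneg_ae hnn (HhOn θ η (le_trans hαS h1) h3)]
    apply lt_of_lt_of_le _ (measure_mono (s := Set.Ioo θ η) _)
    · rw [Real.volume_Ioo]
      exact ENNReal.ofReal_pos.mpr (by linarith)
    · intro x hx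
      constructor
      · simp only [Function.mem_support, ne_eq]
        exact (ne_of_gt (hposf x (le_trans hx.2.le h3) (lt_of_le_of_lt h1 hx.1)))
      · exact ⟨hx.1, hx.2.le⟩
  -- assemble
  have hQ : QsetR α β f c = Set.Icc s S := rfl
  rw [hQ]
  simp only [hred]
  constructor
  · intro H
    constructor
    · by_contra hcon
      push_neg at hcon
      have h1 := key ξ s hξ.1 hcon.le hsβ
      have h2 := intneg ξ s hξ.1 hcon le_rfl
      have h3 := H s ⟨hαs, hsβ⟩
      linarith
    · by_contra hcon
      push_neg at hcon
      have h1 := key S ξ hαS hcon.le hξ.2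
      have h2 := intpos S ξ le_rfl hcon hξ.2
      have h3 := H S ⟨hαS, hSβ⟩
      linarith
  · rintro ⟨h1, h2⟩ η hη
    rcases lt_or_ge η s with hcase | hcase
    · have e1 := key s ξ hαs h1 hξ.2
      have e2 := intzero s ξ le_rfl h1 h2
      have e3 := key η s hη.1 hcase.le hsβ
      have e4 := intnonpos η s hη.1 hcase.le le_rfl
      linarith
    · rcases le_or_gt η S with hcase2 | hcase2
      · have e1 := key s ξ hαs h1 hξ.2
        have e2 := intzero s ξ le_rfl h1 h2
        have e3 := key s η hαs hcase (le_trans hcase2 hSβ)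
        have e4 := intzero s η le_rfl hcase hcase2
        linarith
      · have e1 := key ξ S hξ.1 h2 hSβ
        have e2 := intzero ξ S h1 h2 le_rfl
        have e3 := key S η hαS hcase2.le hη.2
        have e4 := intnonneg S η le_rfl hcase2.le hη.2
        linarith
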